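/- Let φ be an inner function of finite degree k (i.e., dim K_φ = k where K_φ = H²(𝕋) ⊖ φH²(𝕋)). Then the linear span of the functions a - (a,φ)φ, where a ranges over all inner divisors of φ, has dimension k. In particular, the span of {a : a divides φ, a inner} has dimension k+1. -/

import Mathlib

open MeasureTheory Complex Real ComplexConjugate AddCircle

noncomputable section

instance fact2pi : Fact (0 < 2 * π) := ⟨by positivity⟩

abbrev Tc : Type := AddCircle (2 * π)

abbrev haarT : Measure Tc := haarAddCircle

abbrev HL2 : Type := Lp ℂ 2 haarT

def IsHardy (f : HL2) : Prop := ∀ n : ℤ, n < 0 → fourierCoeff (⇑f) n = 0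

def IsHardyFun (u : Tc → ℂ) : Prop := ∀ n : ℤ, n < 0 → fourierCoeff u n = 0

def IsInnerF (θ : Tc → ℂ) : Prop :=
  AEStronglyMeasurable θ haarT ∧ (∀ᵐ x ∂haarT, ‖θ x‖ = 1) ∧ IsHardyFun θ

def IsHankelOp (u : Tc → ℂ) (H : HL2 → HL2) : Prop :=
  MemLp u 2 haarT ∧ IsHardyFun u ∧
  (∃ C : ℝ, ∀ f, ‖H f‖ ≤ C * ‖f‖) ∧
  (∀ f g, H (f + g) = H f + H g) ∧
  (∀ (c : ℂ) (f : HL2), H (c • f) = conj c • H f) ∧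
  (∀ f, IsHardy (H f)) ∧
  (∀ f g : HL2, IsHardy g →
    Integrable (fun x => u x * conj (f x) * conj (g x)) haarT →
    (inner ℂ g (H f) : ℂ) = ∫ x, u x * conj (f x) * conj (g x) ∂haarT)

def IsShiftAdjOf (H K : HL2 → HL2) : Prop :=
  ∀ f, IsHardy (K f) ∧
    ∀ n : ℤ, 0 ≤ n → fourierCoeff (⇑(K f)) n = fourierCoeff (⇑(H f)) (n + 1)

def IsSzego (P : HL2 →L[ℂ] HL2) : Prop :=
  (∀ f, IsHardy (P f)) ∧ ∀ f g : HL2, IsHardy g → (inner ℂ g (f - P f) : ℂ) = 0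

def MemKz (θ : Tc → ℂ) (f : HL2) : Prop :=
  IsHardy f ∧ ∀ h w : HL2, IsHardy h →
    (⇑w =ᵐ[haarT] fun x => fourier 1 x * θ x * h x) → (inner ℂ w f : ℂ) = 0

def MemK (θ : Tc → ℂ) (f : HL2) : Prop :=
  IsHardy f ∧ ∀ h w : HL2, IsHardy h →
    (⇑w =ᵐ[haarT] fun x => θ x * h x) → (inner ℂ w f : ℂ) = 0


/-- An inner function `a` divides the inner function `φ` (both given as boundary functions,
represented by L² elements): `φ = a·c` with `c` inner. -/
def InnerDivides (a φ : HL2) : Prop :=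
  IsInnerF ⇑a ∧ ∃ c : HL2, IsInnerF ⇑c ∧ ⇑φ =ᵐ[haarT] fun x => a x * c x

set_option maxHeartbeats 1000000

abbrev eb : HilbertBasis ℤ ℂ HL2 := @fourierBasis (2*π) _

local notation "⟪" x ", " y "⟫" => @inner ℂ _ _ x y

lemma inner_def' (f g : HL2) : ⟪f, g⟫ = ∫ x, conj (f x) * g x ∂haarT := by
  rw [MeasureTheory.L2.inner_def]; simp only [RCLike.inner_apply']

lemma repr_eq_coeff (f : HL2) (n : ℤ) : eb.repr f n = fourierCoeff (⇑f) n :=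
  fourierBasis_repr f n

lemma coeFn_eb (n : ℤ) : ⇑(eb n) =ᵐ[haarT] fourier n := by
  rw [coe_fourierBasis]; exact coeFn_fourierLp 2 n

/-- a.e.-unimodular measurable function -/
def Unim (θ : Tc → ℂ) : Prop :=
  AEStronglyMeasurable θ haarT ∧ ∀ᵐ x ∂haarT, ‖θ x‖ = 1

lemma Unim.conj {θ : Tc → ℂ} (hθ : Unim θ) : Unim (fun x => conj (θ x)) :=
  ⟨RCLike.continuous_conj.comp_aestronglyMeasurable hθ.1,
   hθ.2.mono fun x hx => by simpa using hx⟩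

lemma unim_fourier (m : ℤ) : Unim (fourier m : C(Tc, ℂ)) :=
  ⟨(map_continuous _).aestronglyMeasurable,
   Filter.Eventually.of_forall (fun x => Circle.norm_coe _)⟩

lemma Unim.memLp {θ : Tc → ℂ} (hθ : Unim θ) (f : HL2) :
    MemLp (fun x => θ x * f x) 2 haarT := by
  refine ⟨hθ.1.mul (Lp.aestronglyMeasurable f), ?_⟩
  have h1 : eLpNorm (fun x => θ x * f x) 2 haarT = eLpNorm (⇑f) 2 haarT := by
    apply eLpNorm_congr_norm_ae
    filter_upwards [hθ.2] with x hx
    simp [hx]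
  rw [h1]
  exact (Lp.memLp f).2

/-- multiplication by a unimodular function: underlying map -/
def mulFun {θ : Tc → ℂ} (hθ : Unim θ) (f : HL2) : HL2 := (hθ.memLp f).toLp _

lemma coeFn_mulFun {θ : Tc → ℂ} (hθ : Unim θ) (f : HL2) :
    ⇑(mulFun hθ f) =ᵐ[haarT] fun x => θ x * f x :=
  (hθ.memLp f).coeFn_toLp

/-- multiplication by a unimodular function, as a linear isometry of `HL2`. -/
def mulLi {θ : Tc → ℂ} (hθ : Unim θ) : HL2 →ₗᵢ[ℂ] HL2 where
  toFun := mulFun hθ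
  map_add' f g := by
    apply Lp.ext
    filter_upwards [coeFn_mulFun hθ f, coeFn_mulFun hθ g, coeFn_mulFun hθ (f + g),
      Lp.coeFn_add f g, Lp.coeFn_add (mulFun hθ f) (mulFun hθ g)] with x h1 h2 h3 h4 h5
    simp only [h1, h2, h3, h4, h5, Pi.add_apply]
    ring
  map_smul' c f := by
    apply Lp.ext
    filter_upwards [coeFn_mulFun hθ f, coeFn_mulFun hθ (c • f),
      Lp.coeFn_smul c f, Lp.coeFn_smul c (mulFun hθ f)] with x h1 h2 h3 h4
    simp only [RingHom.id_apply, h1, h2, h3, h4, Pi.smul_apply, smul_eq_mul]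
    ring
  norm_map' f := by
    show ‖mulFun hθ f‖ = ‖f‖
    rw [Lp.norm_def, Lp.norm_def]
    congr 1
    rw [eLpNorm_congr_ae (coeFn_mulFun hθ f)]
    apply eLpNorm_congr_norm_ae
    filter_upwards [hθ.2] with x hx
    simp [hx]

lemma coeFn_mulLi {θ : Tc → ℂ} (hθ : Unim θ) (f : HL2) :
    ⇑(mulLi hθ f) =ᵐ[haarT] fun x => θ x * f x :=
  (hθ.memLp f).coeFn_toLp

lemma inner_mulLi_left {θ : Tc → ℂ} (hθ : Unim θ) (f g : HL2) :
    ⟪mulLi hθ f, g⟫ = ∫ x, conj (θ x * f x) * g x ∂haarT := by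
  rw [inner_def']
  apply integral_congr_ae
  filter_upwards [coeFn_mulLi hθ f] with x hx
  rw [hx]

lemma inner_mulLi_right {θ : Tc → ℂ} (hθ : Unim θ) (f g : HL2) :
    ⟪f, mulLi hθ g⟫ = ∫ x, conj (f x) * (θ x * g x) ∂haarT := by
  rw [inner_def']
  apply integral_congr_ae
  filter_upwards [coeFn_mulLi hθ g] with x hx
  rw [hx]

lemma mulLi_adjoint {θ : Tc → ℂ} (hθ : Unim θ) (f g : HL2) :
    ⟪mulLi hθ f, g⟫ = ⟪f, mulLi hθ.conj g⟫ := by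
  rw [inner_mulLi_left, inner_mulLi_right]
  apply integral_congr_ae
  filter_upwards with x
  ring_nf
  rw [map_mul]
  ring

lemma mulLi_eb (m n : ℤ) : mulLi (unim_fourier m) (eb n) = eb (m + n) := by
  apply Lp.ext
  filter_upwards [coeFn_mulFun (unim_fourier m) (eb n), coeFn_eb n, coeFn_eb (m + n)]
    with x h1 h2 h3
  rw [show ⇑(mulLi (unim_fourier m) (eb n)) = ⇑(mulFun (unim_fourier m) (eb n)) from rfl,
    h1, h2, h3, fourier_add]

lemma coeFn_mulLi' {θ : Tc → ℂ} (hθ : Unim θ) (f : HL2) :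
    ⇑(mulLi hθ f) =ᵐ[haarT] fun x => θ x * f x := coeFn_mulFun hθ f

lemma repr_mulLi {θ : Tc → ℂ} (hθ : Unim θ) (f : HL2) (n : ℤ) :
    eb.repr (mulLi hθ f) n = ⟪mulLi hθ.conj (eb n), f⟫ := by
  rw [eb.repr_apply_apply, inner_mulLi_right, inner_mulLi_left]
  apply integral_congr_ae
  filter_upwards with x
  simp only [map_mul, Complex.conj_conj]
  ring

lemma repr_conjmul_eb {θ : Tc → ℂ} (hθ : Unim θ) (n m : ℤ) :
    eb.repr (mulLi hθ.conj (eb n)) m = conj (fourierCoeff θ (n - m)) := by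
  rw [eb.repr_apply_apply, inner_mulLi_right]
  have key : ∀ᵐ x ∂haarT,
      conj ((eb m) x) * ((fun x => conj (θ x)) x * (eb n) x)
        = conj ((fourier (m - n) : C(Tc, ℂ)) x * θ x) := by
    filter_upwards [coeFn_eb m, coeFn_eb n] with x h2 h3
    rw [h2, h3]
    have h4 : (fourier (m - n) : C(Tc, ℂ)) x = fourier m x * conj (fourier n x) := by
      rw [← fourier_neg, ← fourier_add, sub_eq_add_neg]
    rw [h4]
    simp only [map_mul, Complex.conj_conj]
    ring
  rw [integral_congr_ae key, integral_conj]
  congr 1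
  rw [fourierCoeff]
  congr 1
  ext t
  rw [neg_sub, smul_eq_mul]

lemma inner_eq_tsum' (f g : HL2) :
    ⟪f, g⟫ = ∑' n, conj (eb.repr f n) * eb.repr g n := by
  rw [← eb.repr.inner_map_map f g, lp.inner_eq_tsum]
  exact tsum_congr fun n => RCLike.inner_apply' _ _

lemma inner_eq_zero_of_repr {f g : HL2}
    (h : ∀ n, eb.repr f n = 0 ∨ eb.repr g n = 0) : ⟪f, g⟫ = 0 := by
  rw [inner_eq_tsum']
  convert tsum_zero with n
  rcases h n with h' | h' <;> simp [h']

lemma inner_eq_single (n0 : ℤ) {f g : HL2}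
    (h : ∀ n, n ≠ n0 → eb.repr f n = 0 ∨ eb.repr g n = 0) :
    ⟪f, g⟫ = conj (eb.repr f n0) * eb.repr g n0 := by
  rw [inner_eq_tsum']
  apply tsum_eq_single
  intro n hn
  rcases h n hn with h' | h' <;> simp [h']

lemma mulLi_congr {θ θ' : Tc → ℂ} (hθ : Unim θ) (hθ' : Unim θ') (h : θ =ᵐ[haarT] θ')
    (f : HL2) : mulLi hθ f = mulLi hθ' f := by
  apply Lp.ext
  filter_upwards [coeFn_mulLi' hθ f, coeFn_mulLi' hθ' f, h] with x h1 h2 h3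
  rw [h1, h2, h3]

/-- The Hardy subspace H² of `HL2`. -/
def Hsub : Submodule ℂ HL2 where
  carrier := {f | ∀ n : ℤ, n < 0 → eb.repr f n = 0}
  add_mem' := by
    intro f g hf hg n hn
    rw [map_add]
    simp [lp.coeFn_add, hf n hn, hg n hn]
  zero_mem' := by intro n hn; simp
  smul_mem' := by
    intro c f hf n hn
    rw [_root_.map_smul]
    simp [lp.coeFn_smul, hf n hn]

lemma mem_Hsub {f : HL2} : f ∈ Hsub ↔ ∀ n : ℤ, n < 0 → eb.repr f n = 0 := Iff.rfl

lemma isClosed_Hsub : IsClosed (Hsub : Set HL2) := by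
  have : (Hsub : Set HL2) = ⋂ (n : ℤ) (_ : n < 0), {f : HL2 | (inner ℂ (eb n) f : ℂ) = 0} := by
    ext f
    simp only [Set.mem_iInter, Set.mem_setOf_eq, SetLike.mem_coe, mem_Hsub]
    constructor
    · intro h n hn; rw [← eb.repr_apply_apply]; exact h n hn
    · intro h n hn; rw [eb.repr_apply_apply]; exact h n hn
  rw [this]
  refine isClosed_iInter fun n => isClosed_iInter fun _ => ?_
  exact isClosed_eq (innerSL ℂ (eb n)).continuous continuous_const

/-- The shift operator. -/
def Sop : HL2 →ₗᵢ[ℂ] HL2 := mulLi (unim_fourier 1)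

lemma repr_Sop (f : HL2) (n : ℤ) : eb.repr (Sop f) n = eb.repr f (n - 1) := by
  rw [show Sop f = mulLi (unim_fourier 1) f from rfl, repr_mulLi,
    mulLi_congr ((unim_fourier 1).conj) (unim_fourier (-1))
      (Filter.Eventually.of_forall fun x => fourier_neg.symm),
    mulLi_eb, ← eb.repr_apply_apply, show (-1 : ℤ) + n = n - 1 by ring]

lemma Sop_mem_Hsub {f : HL2} (hf : f ∈ Hsub) : Sop f ∈ Hsub := by
  intro n hn
  rw [repr_Sop]
  exact hf _ (by omega)

section Phi

variable {φf : Tc → ℂ}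

/-- the subspace φ·H². -/
def Fsub (hφu : Unim φf) : Submodule ℂ HL2 := Hsub.map (mulLi hφu).toLinearMap

lemma mem_Fsub {hφu : Unim φf} {g : HL2} :
    g ∈ Fsub hφu ↔ ∃ h ∈ Hsub, mulLi hφu h = g := by
  simp [Fsub, Submodule.mem_map]

lemma isClosed_Fsub (hφu : Unim φf) : IsClosed ((Fsub hφu : Submodule ℂ HL2) : Set HL2) := by
  have h1 : ((Fsub hφu : Submodule ℂ HL2) : Set HL2) = (mulLi hφu) '' (Hsub : Set HL2) := by
    ext g; simp [mem_Fsub, Set.mem_image]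
  rw [h1]
  exact ((mulLi hφu).isometry.isClosedEmbedding).isClosedMap _ isClosed_Hsub

lemma Fsub_le_Hsub (hφu : Unim φf) (hφh : ∀ n : ℤ, n < 0 → fourierCoeff φf n = 0) :
    Fsub hφu ≤ Hsub := by
  intro g hg
  rcases mem_Fsub.1 hg with ⟨h, hh, rfl⟩
  intro n hn
  rw [repr_mulLi]
  apply inner_eq_zero_of_repr
  intro m
  rcases lt_or_ge m 0 with hm | hm
  · exact Or.inr (hh m hm)
  · left
    rw [repr_conjmul_eb hφu, hφh (n - m) (by omega)]
    simp

/-- the model space K_φ as a submodule. -/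
def Ksub (hφu : Unim φf) : Submodule ℂ HL2 := Hsub ⊓ (Fsub hφu)ᗮ

lemma mem_Ksub {hφu : Unim φf} {f : HL2} :
    f ∈ Ksub hφu ↔ f ∈ Hsub ∧ ∀ h ∈ Hsub, (inner ℂ (mulLi hφu h) f : ℂ) = 0 := by
  constructor
  · rintro ⟨h1, h2⟩
    exact ⟨h1, fun h hh => h2 _ (mem_Fsub.2 ⟨h, hh, rfl⟩)⟩
  · rintro ⟨h1, h2⟩
    refine ⟨h1, fun u hu => ?_⟩
    rcases mem_Fsub.1 hu with ⟨h, hh, rfl⟩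
    exact h2 h hh

lemma Ksub_inf_Fsub (hφu : Unim φf) {f : HL2} (h1 : f ∈ Ksub hφu) (h2 : f ∈ Fsub hφu) :
    f = 0 := by
  have := h1.2 _ h2
  simpa using this

end Phi

section L1Unique

lemma integral_contMul_eq_zero {f : Tc → ℂ} (hf : Integrable f haarT)
    (hc : ∀ n : ℤ, fourierCoeff f n = 0) (g : C(Tc, ℂ)) :
    ∫ x, g x * f x ∂haarT = 0 := by
  have hint : ∀ g : C(Tc, ℂ), Integrable (fun x => g x * f x) haarT := fun g =>
    hf.bdd_mul (map_continuous g).aestronglyMeasurable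
      (Filter.Eventually.of_forall fun x => g.norm_coe_le_norm x)
  set Z : Set C(Tc, ℂ) := {g | ∫ x, g x * f x ∂haarT = 0} with hZ
  have hZc : IsClosed Z := by
    have hlip : LipschitzWith (∫ x, ‖f x‖ ∂haarT).toNNReal
        (fun g : C(Tc, ℂ) => ∫ x, g x * f x ∂haarT) := by
      apply LipschitzWith.of_dist_le_mul
      intro g g'
      rw [dist_eq_norm, dist_eq_norm, ← integral_sub (hint g) (hint g')]
      have h1 : ∀ x, g x * f x - g' x * f x = (g - g') x * f x := by
        intro x; simp [ContinuousMap.sub_apply]; ring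
      simp_rw [h1]
      calc ‖∫ x, (g - g') x * f x ∂haarT‖
          ≤ ∫ x, ‖(g - g') x * f x‖ ∂haarT := norm_integral_le_integral_norm _
        _ ≤ ∫ x, ‖g - g'‖ * ‖f x‖ ∂haarT := by
            apply integral_mono (hint (g - g')).norm (hf.norm.const_mul _)
            intro x
            dsimp only
            rw [norm_mul]
            exact mul_le_mul_of_nonneg_right ((g - g').norm_coe_le_norm x) (norm_nonneg _)
        _ = (∫ x, ‖f x‖ ∂haarT).toNNReal * ‖g - g'‖ := by
            rw [integral_const_mul]
            rw [Real.coe_toNNReal _ (integral_nonneg fun x => norm_nonneg _)]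
            ring
    exact isClosed_eq hlip.continuous continuous_const
  have hspan : (Submodule.span ℂ (Set.range (@fourier (2 * π))) : Set C(Tc, ℂ)) ⊆ Z := by
    intro g hg
    induction hg using Submodule.span_induction with
    | mem g hg =>
        rcases hg with ⟨m, rfl⟩
        show ∫ x, fourier m x * f x ∂haarT = 0
        have : ∫ x, fourier m x * f x ∂haarT = fourierCoeff f (-m) := by
          rw [fourierCoeff, neg_neg]
          simp_rw [smul_eq_mul]
        rw [this, hc]
    | zero => show ∫ x, (0 : C(Tc, ℂ)) x * f x ∂haarT = 0; simp
    | add u v hu hv hu' hv' =>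
        show ∫ x, (u + v) x * f x ∂haarT = 0
        have : ∀ x, (u + v) x * f x = u x * f x + v x * f x := by
          intro x; simp [ContinuousMap.add_apply]; ring
        simp_rw [this]
        rw [integral_add (hint u) (hint v)]
        rw [hu', hv', add_zero]
    | smul c u hu hu' =>
        show ∫ x, (c • u) x * f x ∂haarT = 0
        have : ∀ x, (c • u) x * f x = c * (u x * f x) := by
          intro x; simp [ContinuousMap.smul_apply]; ring
        simp_rw [this]
        rw [integral_const_mul, hu', mul_zero]
  have htop := @span_fourier_closure_eq_top (2 * π) _
  have : g ∈ (Submodule.span ℂ (Set.range (@fourier (2 * π)))).topologicalClosure := by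
    rw [htop]; trivial
  have hsub : ((Submodule.span ℂ (Set.range (@fourier (2 * π)))).topologicalClosure
      : Set C(Tc, ℂ)) ⊆ Z := by
    rw [Submodule.topologicalClosure_coe]
    exact closure_minimal hspan hZc
  exact hsub this

lemma setIntegral_eq_zero_of_closed {f : Tc → ℂ} (hf : Integrable f haarT)
    (hcont : ∀ g : C(Tc, ℂ), ∫ x, g x * f x ∂haarT = 0)
    {s : Set Tc} (hs : IsClosed s) : ∫ x in s, f x ∂haarT = 0 := by
  rcases s.eq_empty_or_nonempty with rfl | hne
  · simp
  -- continuous approximations to the indicator function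
  have gc : ∀ k : ℕ, Continuous fun x : Tc => ((max (1 - k * Metric.infDist x s) 0 : ℝ) : ℂ) := by
    intro k
    apply Complex.continuous_ofReal.comp
    exact (continuous_const.sub ((continuous_const).mul
      (Metric.continuous_infDist_pt s))).max continuous_const
  set g : ℕ → C(Tc, ℂ) := fun k => ⟨_, gc k⟩ with hg
  have hbd : ∀ (k : ℕ) (x : Tc), ‖g k x‖ ≤ 1 := by
    intro k x
    show ‖((max (1 - k * Metric.infDist x s) 0 : ℝ) : ℂ)‖ ≤ 1
    have h0 : (0:ℝ) ≤ max (1 - k * Metric.infDist x s) 0 := le_max_right _ _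
    rw [Complex.norm_real, Real.norm_eq_abs, _root_.abs_of_nonneg h0]
    apply max_le _ zero_le_one
    have : (0:ℝ) ≤ k * Metric.infDist x s :=
      mul_nonneg (Nat.cast_nonneg k) (Metric.infDist_nonneg)
    linarith
  have hlim : ∀ᵐ x ∂haarT, Filter.Tendsto (fun k => g k x * f x) Filter.atTop
      (nhds (s.indicator f x)) := by
    filter_upwards with x
    by_cases hx : x ∈ s
    · have h0 : Metric.infDist x s = 0 := Metric.infDist_zero_of_mem hx
      have : ∀ k : ℕ, g k x * f x = f x := by
        intro k
        show ((max (1 - k * Metric.infDist x s) 0 : ℝ) : ℂ) * f x = f x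
        rw [h0]
        norm_num
      simp_rw [this, Set.indicator_of_mem hx]
      exact tendsto_const_nhds
    · have hpos : 0 < Metric.infDist x s := (hs.notMem_iff_infDist_pos hne).1 hx
      rw [Set.indicator_of_notMem hx]
      apply Filter.Tendsto.congr' _ tendsto_const_nhds
      rw [Filter.EventuallyEq, Filter.eventually_atTop]
      obtain ⟨k0, hk0⟩ := exists_nat_gt (1 / Metric.infDist x s)
      refine ⟨k0, fun k hk => ?_⟩
      have hk' : 1 / Metric.infDist x s < k := lt_of_lt_of_le hk0 (by exact_mod_cast hk)
      have h1 : 1 - k * Metric.infDist x s ≤ 0 := by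
        rw [div_lt_iff₀ hpos] at hk'
        linarith
      show (0:ℂ) = ((max (1 - k * Metric.infDist x s) 0 : ℝ) : ℂ) * f x
      rw [max_eq_right h1]
      simp
  have hmeas : ∀ k : ℕ, AEStronglyMeasurable (fun x => g k x * f x) haarT := fun k =>
    ((map_continuous (g k)).aestronglyMeasurable).mul hf.1
  have hdom : ∀ (k : ℕ), ∀ᵐ x ∂haarT, ‖g k x * f x‖ ≤ ‖f x‖ := by
    intro k
    filter_upwards with x
    rw [norm_mul]
    calc ‖g k x‖ * ‖f x‖ ≤ 1 * ‖f x‖ :=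
          mul_le_mul_of_nonneg_right (hbd k x) (norm_nonneg _)
      _ = ‖f x‖ := one_mul _
  have := MeasureTheory.tendsto_integral_of_dominated_convergence (fun x => ‖f x‖)
    hmeas hf.norm hdom hlim
  have h2 : Filter.Tendsto (fun k => ∫ x, g k x * f x ∂haarT) Filter.atTop (nhds 0) := by
    simp_rw [hcont]
    exact tendsto_const_nhds
  have h3 := tendsto_nhds_unique this h2
  rwa [MeasureTheory.integral_indicator hs.measurableSet] at h3

end L1Unique

section L1Unique2

lemma real_eq_zero_of_setIntegral_closed {u : Tc → ℝ} (hu : Integrable u haarT)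
    (h : ∀ s : Set Tc, IsClosed s → ∫ x in s, u x ∂haarT = 0) : u =ᵐ[haarT] 0 := by
  set upos : Tc → ℝ := fun x => max (u x) 0 with hupos
  set uneg : Tc → ℝ := fun x => max (-u x) 0 with huneg
  have hup : Integrable upos haarT := hu.pos_part
  have hun : Integrable uneg haarT := hu.neg.pos_part
  have hsplit : ∀ x, u x = upos x - uneg x := by
    intro x
    rw [hupos, huneg]
    rcases le_total (u x) 0 with h' | h'
    · simp only [max_eq_right h', max_eq_left (neg_nonneg.2 h')]; ring
    · simp only [max_eq_left h', max_eq_right (neg_nonpos.2 h')]; ring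
  -- set integrals of upos and uneg agree on closed sets
  have hagree : ∀ s : Set Tc, MeasurableSet s → IsClosed s →
      ∫ x in s, upos x ∂haarT = ∫ x in s, uneg x ∂haarT := by
    intro s hms hcs
    have h1 : ∫ x in s, u x ∂haarT
        = (∫ x in s, upos x ∂haarT) - ∫ x in s, uneg x ∂haarT := by
      rw [← integral_sub hup.integrableOn hun.integrableOn]
      exact integral_congr_ae (Filter.Eventually.of_forall fun x => hsplit x)
    have := h s hcs
    rw [h1] at this
    linarith
  -- define the two density measures
  set μ1 : Measure Tc := haarT.withDensity (fun x => ENNReal.ofReal (upos x)) with hμ1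
  set μ2 : Measure Tc := haarT.withDensity (fun x => ENNReal.ofReal (uneg x)) with hμ2
  have happ : ∀ (v : Tc → ℝ), Integrable v haarT → (∀ x, 0 ≤ v x) → ∀ s : Set Tc,
      MeasurableSet s →
      haarT.withDensity (fun x => ENNReal.ofReal (v x)) s
        = ENNReal.ofReal (∫ x in s, v x ∂haarT) := by
    intro v hv hv0 s hms
    rw [withDensity_apply _ hms]
    rw [MeasureTheory.ofReal_integral_eq_lintegral_ofReal hv.integrableOn
      (Filter.Eventually.of_forall fun x => hv0 x)]
  have hup0 : ∀ x, 0 ≤ upos x := fun x => le_max_right _ _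
  have hun0 : ∀ x, 0 ≤ uneg x := fun x => le_max_right _ _
  have hfin1 : IsFiniteMeasure μ1 := by
    constructor
    rw [hμ1, happ upos hup hup0 Set.univ MeasurableSet.univ]
    exact ENNReal.ofReal_lt_top
  have hfin2 : IsFiniteMeasure μ2 := by
    constructor
    rw [hμ2, happ uneg hun hun0 Set.univ MeasurableSet.univ]
    exact ENNReal.ofReal_lt_top
  have hext : μ1 = μ2 := by
    apply MeasureTheory.ext_of_generate_finite {s : Set Tc | IsClosed s}
    · rw [BorelSpace.measurable_eq (α := Tc), borel_eq_generateFrom_isClosed]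
    · exact fun s hs t ht _ => hs.inter ht
    · intro s hs
      have hms : MeasurableSet s := hs.measurableSet
      rw [hμ1, hμ2, happ upos hup hup0 s hms, happ uneg hun hun0 s hms,
        hagree s hms hs]
    · rw [hμ1, hμ2, happ upos hup hup0 Set.univ MeasurableSet.univ,
        happ uneg hun hun0 Set.univ MeasurableSet.univ,
        hagree Set.univ MeasurableSet.univ isClosed_univ]
  have hae : upos =ᵐ[haarT] uneg := by
    apply ae_eq_of_forall_setIntegral_eq_of_sigmaFinite
      (fun s _ _ => hup.integrableOn) (fun s _ _ => hun.integrableOn)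
    intro s hms _
    have h1 := happ upos hup hup0 s hms
    have h2 := happ uneg hun hun0 s hms
    have h3 : μ1 s = μ2 s := by rw [hext]
    rw [hμ1, h1, hμ2, h2] at h3
    exact (ENNReal.ofReal_eq_ofReal_iff
      (integral_nonneg (μ := haarT.restrict s) fun x => hup0 x)
      (integral_nonneg (μ := haarT.restrict s) fun x => hun0 x)).1 h3
  filter_upwards [hae] with x hx
  rw [Pi.zero_apply, hsplit x, hx]
  ring

/-- Uniqueness of Fourier coefficients for integrable functions on the circle. -/
lemma ae_zero_of_fourierCoeff_zero {f : Tc → ℂ} (hf : Integrable f haarT)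
    (hc : ∀ n : ℤ, fourierCoeff f n = 0) : f =ᵐ[haarT] 0 := by
  have hcont := integral_contMul_eq_zero hf hc
  have hclosed : ∀ s : Set Tc, IsClosed s → ∫ x in s, f x ∂haarT = 0 := fun s hs =>
    setIntegral_eq_zero_of_closed hf hcont hs
  have hre : (fun x => (f x).re) =ᵐ[haarT] 0 := by
    apply real_eq_zero_of_setIntegral_closed hf.re
    intro s hs
    rw [integral_re hf.integrableOn, hclosed s hs]; simp
  have him : (fun x => (f x).im) =ᵐ[haarT] 0 := by
    apply real_eq_zero_of_setIntegral_closed hf.im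
    intro s hs
    rw [integral_im hf.integrableOn, hclosed s hs]; simp
  filter_upwards [hre, him] with x h1 h2
  have h1' : (f x).re = 0 := h1
  have h2' : (f x).im = 0 := h2
  rw [Pi.zero_apply]
  exact Complex.ext h1' h2'

end L1Unique2

section BeurlingPrep

lemma eq_zero_of_repr {f : HL2} (h : ∀ n : ℤ, eb.repr f n = 0) : f = 0 := by
  have h1 : eb.repr f = 0 := by
    apply lp.ext
    funext n
    simpa using h n
  have := congrArg eb.repr.symm h1
  rwa [eb.repr.symm_apply_apply, map_zero] at this

lemma eb_mem_Hsub {m : ℤ} (hm : 0 ≤ m) : eb m ∈ Hsub := by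
  intro n hn
  rw [eb.repr_self]
  exact lp.single_apply_ne _ _ _ (by omega)

lemma mulLi_fourier_zero (f : HL2) : mulLi (unim_fourier 0) f = f := by
  apply Lp.ext
  filter_upwards [coeFn_mulLi' (unim_fourier 0) f] with x h1
  rw [h1, fourier_zero, one_mul]

lemma mulLi_fourier_comp (a b : ℤ) (f : HL2) :
    mulLi (unim_fourier a) (mulLi (unim_fourier b) f)
      = mulLi (unim_fourier (a + b)) f := by
  apply Lp.ext
  filter_upwards [coeFn_mulLi' (unim_fourier a) (mulLi (unim_fourier b) f),
    coeFn_mulLi' (unim_fourier b) f, coeFn_mulLi' (unim_fourier (a + b)) f] with x h1 h2 h3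
  rw [h1, h2, h3, fourier_add]
  ring

lemma repr_shift (k : ℤ) (f : HL2) (n : ℤ) :
    eb.repr (mulLi (unim_fourier k) f) n = eb.repr f (n - k) := by
  rw [repr_mulLi,
    mulLi_congr ((unim_fourier k).conj) (unim_fourier (-k))
      (Filter.Eventually.of_forall fun x => fourier_neg.symm),
    mulLi_eb, ← eb.repr_apply_apply, show -k + n = n - k by ring]

lemma pow_shift_mem {L : Submodule ℂ HL2} (hinv : ∀ x ∈ L, Sop x ∈ L) {c : HL2}
    (hcL : c ∈ L) {n : ℤ} (hn : 0 ≤ n) : mulLi (unim_fourier n) c ∈ L := by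
  have key : ∀ k : ℕ, mulLi (unim_fourier (k : ℤ)) c ∈ L := by
    intro k
    induction k with
    | zero =>
        have h0 : ((0 : ℕ) : ℤ) = 0 := by norm_num
        rw [h0, mulLi_fourier_zero]
        exact hcL
    | succ k ih =>
        have hidx : ((k + 1 : ℕ) : ℤ) = 1 + (k : ℤ) := by push_cast; ring
        rw [hidx, ← mulLi_fourier_comp 1 (k : ℤ) c]
        exact hinv _ ih
  have h2 : n = ((n.toNat : ℕ) : ℤ) := (Int.toNat_of_nonneg hn).symm
  rw [h2]
  exact key n.toNat

lemma isClosed_map_mulLi {θ : Tc → ℂ} (hθ : Unim θ) {L : Submodule ℂ HL2}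
    (hLc : IsClosed (L : Set HL2)) :
    IsClosed ((L.map (mulLi hθ).toLinearMap : Submodule ℂ HL2) : Set HL2) := by
  have h1 : ((L.map (mulLi hθ).toLinearMap : Submodule ℂ HL2) : Set HL2)
      = (mulLi hθ) '' (L : Set HL2) := by
    ext g; simp [Submodule.mem_map]
  rw [h1]
  exact ((mulLi hθ).isometry.isClosedEmbedding).isClosedMap _ hLc

lemma mulLi_coe_eb {c : HL2} (hc : Unim ⇑c) (n : ℤ) :
    mulLi hc (eb n) = mulLi (unim_fourier n) c := by
  apply Lp.ext
  filter_upwards [coeFn_mulLi' hc (eb n), coeFn_mulLi' (unim_fourier n) c, coeFn_eb n]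
    with x h1 h2 h3
  rw [h1, h2, h3]
  ring

/-- generation: if a closed submodule contains all `zⁿ·c` for `n ≥ 0` then it contains
`c·h` for every Hardy `h`. -/
lemma mulLi_mem_of_gen {θ : Tc → ℂ} (hθ : Unim θ) {L' : Submodule ℂ HL2}
    (hc : IsClosed (L' : Set HL2))
    (hgen : ∀ n : ℤ, 0 ≤ n → mulLi hθ (eb n) ∈ L') {h : HL2} (hh : h ∈ Hsub) :
    mulLi hθ h ∈ L' := by
  have hsum : HasSum (fun n : ℤ => eb.repr h n • mulLi hθ (eb n)) (mulLi hθ h) := by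
    have h0 := eb.hasSum_repr h
    have h1 := h0.mapL (mulLi hθ).toContinuousLinearMap
    convert h1 using 2 with n
    all_goals simp
  apply hc.mem_of_tendsto hsum
  filter_upwards with s
  apply Submodule.sum_mem
  intro n _
  rcases lt_or_ge n 0 with hn | hn
  · rw [hh n hn, zero_smul]; exact L'.zero_mem
  · exact L'.smul_mem _ (hgen n hn)

lemma integral_fourier (m : ℤ) :
    ∫ x, fourier m x ∂haarT = if m = 0 then 1 else 0 := by
  have h1 : (inner ℂ (eb 0) (eb m) : ℂ) = ∫ x, fourier m x ∂haarT := by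
    rw [inner_def']
    apply integral_congr_ae
    filter_upwards [coeFn_eb 0, coeFn_eb m] with x h1 h2
    rw [h1, h2, fourier_zero, map_one, one_mul]
  rw [← h1]
  have := eb.orthonormal
  rcases eq_or_ne m 0 with rfl | hm
  · exact orthonormal_iff_ite.1 this 0 0
  · rw [orthonormal_iff_ite.1 this 0 m]
    simp only [if_neg hm]
    rw [if_neg (by omega : ¬ (0 : ℤ) = m)]

end BeurlingPrep

section Beurling

lemma beurling {L : Submodule ℂ HL2} (hLc : IsClosed (L : Set HL2))
    (hLinv : ∀ x ∈ L, Sop x ∈ L) (hLH : L ≤ Hsub) (hLne : L ≠ ⊥) :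
    ∃ c : HL2, c ∈ L ∧ Unim ⇑c ∧
      (∀ x ∈ L, ∃ h ∈ Hsub, ⇑x =ᵐ[haarT] fun t => c t * h t) ∧
      (∀ L' : Submodule ℂ HL2, IsClosed ((L' : Submodule ℂ HL2) : Set HL2) →
        (∀ y ∈ L', Sop y ∈ L') → c ∈ L' → L ≤ L') := by
  classical
  set SL : Submodule ℂ HL2 := L.map (mulLi (unim_fourier 1)).toLinearMap with hSL
  have hSLmem : ∀ {y : HL2}, y ∈ SL ↔ ∃ x ∈ L, Sop x = y := by
    intro y
    rw [hSL, Submodule.mem_map]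
    rfl
  have hSLc : IsClosed (SL : Set HL2) := isClosed_map_mulLi _ hLc
  have hSLle : SL ≤ L := by
    intro y hy
    rcases hSLmem.1 hy with ⟨z, hz, rfl⟩
    exact hLinv z hz
  have hSmem : ∀ (y : HL2), y ∈ L → ∀ n : ℤ, 1 ≤ n → mulLi (unim_fourier n) y ∈ SL := by
    intro y hy n hn
    have h1 : mulLi (unim_fourier (n - 1)) y ∈ L := pow_shift_mem hLinv hy (by omega)
    have h2 := mulLi_fourier_comp 1 (n - 1) y
    rw [show (1 : ℤ) + (n - 1) = n by ring] at h2
    exact hSLmem.2 ⟨_, h1, h2⟩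
  have hSLne : SL ≠ L := by
    intro hEq
    apply hLne
    rw [Submodule.eq_bot_iff]
    intro f hf
    have hrep : ∀ k : ℕ, ∃ g, g ∈ L ∧ f = mulLi (unim_fourier (k : ℤ)) g := by
      intro k
      induction k with
      | zero =>
          refine ⟨f, hf, ?_⟩
          rw [show ((0 : ℕ) : ℤ) = 0 by norm_num, mulLi_fourier_zero]
      | succ k ih =>
          rcases ih with ⟨g, hg, rfl⟩
          have hg' : g ∈ SL := by rw [hEq]; exact hg
          rcases hSLmem.1 hg' with ⟨g', hg'L, rfl⟩
          refine ⟨g', hg'L, ?_⟩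
          have := mulLi_fourier_comp (k : ℤ) 1 g'
          rw [show (k : ℤ) + 1 = ((k + 1 : ℕ) : ℤ) by push_cast; ring] at this
          rw [← this]
          rfl
    apply eq_zero_of_repr
    intro m
    rcases hrep (m.toNat + 1) with ⟨g, hg, rfl⟩
    rw [repr_shift]
    apply hLH hg
    have := Int.self_le_toNat m
    push_cast
    omega
  obtain ⟨x, hxL, hxSL⟩ := SetLike.exists_of_lt (lt_of_le_of_ne hSLle hSLne)
  haveI := hSLc.completeSpace_coe
  set c0 : HL2 := x - (Submodule.orthogonalProjectionOnto SL x : HL2) with hc0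
  have hc0L : c0 ∈ L := L.sub_mem hxL (hSLle (SetLike.coe_mem _))
  have hc0o : c0 ∈ SLᗮ := Submodule.sub_starProjection_mem_orthogonal x
  have hc0ne : c0 ≠ 0 := by
    intro h
    apply hxSL
    have : x = (Submodule.orthogonalProjectionOnto SL x : HL2) := by
      have := sub_eq_zero.1 h
      exact this
    rw [this]
    exact SetLike.coe_mem _
  set c : HL2 := ((‖c0‖ : ℂ))⁻¹ • c0 with hcdef
  have hcL : c ∈ L := L.smul_mem _ hc0L
  have hco : c ∈ SLᗮ := Submodule.smul_mem _ _ hc0o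
  have hcnorm : ‖c‖ = 1 := by
    rw [hcdef, norm_smul, norm_inv, Complex.norm_real, Real.norm_eq_abs,
      _root_.abs_of_nonneg (norm_nonneg c0), inv_mul_cancel₀ (norm_ne_zero_iff.2 hc0ne)]
  have horth : ∀ n : ℤ, 1 ≤ n → (inner ℂ (mulLi (unim_fourier n) c) c : ℂ) = 0 := by
    intro n hn
    exact (Submodule.mem_orthogonal SL c).1 hco _ (hSmem c hcL n hn)
  -- unimodularity of c
  have hccint : Integrable (fun t => conj (c t) * c t) haarT := by
    have h1 := MeasureTheory.L2.integrable_inner (𝕜 := ℂ) c c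
    have h2 : (fun t => (inner ℂ (c t) (c t) : ℂ)) = fun t => conj (c t) * c t := by
      funext t; exact RCLike.inner_apply' _ _
    rwa [h2] at h1
  set q : Tc → ℂ := fun t => conj (c t) * c t - 1 with hqdef
  have hqint : Integrable q haarT := hccint.sub (integrable_const 1)
  have hfmul_int : ∀ (m : ℤ) (v : Tc → ℂ), Integrable v haarT →
      Integrable (fun t => fourier m t * v t) haarT := by
    intro m v hv
    exact hv.bdd_mul (map_continuous (fourier m)).aestronglyMeasurable
      (Filter.Eventually.of_forall fun t => le_of_eq (Circle.norm_coe _))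
  have hA : ∀ n : ℤ, ∫ t, fourier (-n) t * (conj (c t) * c t) ∂haarT
      = (inner ℂ (mulLi (unim_fourier n) c) c : ℂ) := by
    intro n
    rw [inner_mulLi_left]
    apply integral_congr_ae
    filter_upwards with t
    rw [fourier_neg, map_mul]
    ring
  have hq0 : ∀ n : ℤ, fourierCoeff q n = 0 := by
    have key : ∀ n : ℤ, 0 ≤ n → fourierCoeff q n = 0 := by
      intro n hn
      have h1 : fourierCoeff q n
          = (∫ t, fourier (-n) t * (conj (c t) * c t) ∂haarT)
            - ∫ t, fourier (-n) t ∂haarT := by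
        have hfo : Integrable (fun t => fourier (-n) t) haarT := by
          simpa using hfmul_int (-n) (fun _ => (1:ℂ)) (integrable_const 1)
        rw [fourierCoeff, ← integral_sub (hfmul_int (-n) _ hccint) hfo]
        apply integral_congr_ae
        filter_upwards with t
        rw [hqdef, smul_eq_mul]
        ring
      rcases eq_or_lt_of_le hn with hn0 | hn1
      · rw [h1, hA, ← hn0, mulLi_fourier_zero, integral_fourier]
        have h2 : (inner ℂ c c : ℂ) = 1 := by
          rw [inner_self_eq_norm_sq_to_K, hcnorm]
          norm_num
        rw [h2]
        norm_num
      · rw [h1, hA, horth n (by omega), integral_fourier, if_neg (by omega), sub_zero]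
    intro n
    rcases le_or_gt 0 n with hn | hn
    · exact key n hn
    · have hconjq : ∀ t, conj (q t) = q t := by
        intro t
        rw [hqdef]
        simp only [map_sub, map_mul, Complex.conj_conj, map_one]
        ring_nf
      have h2 : fourierCoeff q n = conj (fourierCoeff q (-n)) := by
        rw [fourierCoeff, fourierCoeff, ← integral_conj]
        apply integral_congr_ae
        filter_upwards with t
        rw [neg_neg, smul_eq_mul, smul_eq_mul, map_mul, hconjq, fourier_neg]
      rw [h2, key (-n) (by omega), map_zero]
  have hae := ae_zero_of_fourierCoeff_zero hqint hq0
  have hunim : ∀ᵐ t ∂haarT, ‖c t‖ = 1 := by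
    filter_upwards [hae] with t ht
    have h1 : conj (c t) * c t = 1 := by
      have : q t = 0 := ht
      rw [hqdef] at this
      linear_combination this
    have h2 : ((Complex.normSq (c t) : ℝ) : ℂ) = 1 := by
      rw [← Complex.mul_conj (c t), ← h1]
      ring
    have h3 : Complex.normSq (c t) = 1 := by exact_mod_cast h2
    rw [Complex.normSq_eq_norm_sq] at h3
    exact (pow_eq_one_iff_of_nonneg (norm_nonneg _) two_ne_zero).1 h3
  have hcU : Unim ⇑c := ⟨Lp.aestronglyMeasurable c, hunim⟩
  -- generation
  have hGenLe : ∀ L' : Submodule ℂ HL2, IsClosed ((L' : Submodule ℂ HL2) : Set HL2) →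
      (∀ y ∈ L', Sop y ∈ L') → c ∈ L' → Fsub hcU ≤ L' := by
    intro L' h1 h2 h3 g hg
    rcases mem_Fsub.1 hg with ⟨h, hh, rfl⟩
    apply mulLi_mem_of_gen hcU h1 _ hh
    intro n hn
    rw [mulLi_coe_eb]
    exact pow_shift_mem h2 h3 hn
  have hLle : L ≤ Fsub hcU := by
    intro z hzL
    haveI := (isClosed_Fsub hcU).completeSpace_coe
    set r : HL2 := z - (Submodule.orthogonalProjectionOnto (Fsub hcU) z : HL2) with hrdef
    have hPz : (Submodule.orthogonalProjectionOnto (Fsub hcU) z : HL2) ∈ Fsub hcU := SetLike.coe_mem _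
    have hrL : r ∈ L := L.sub_mem hzL (hGenLe L hLc hLinv hcL hPz)
    have hro : r ∈ (Fsub hcU)ᗮ := Submodule.sub_starProjection_mem_orthogonal z
    set w : Tc → ℂ := fun t => conj (c t) * r t with hwdef
    have hwint : Integrable w haarT := by
      have h1 := MeasureTheory.L2.integrable_inner (𝕜 := ℂ) c r
      have h2 : (fun t => (inner ℂ (c t) (r t) : ℂ)) = w := by
        funext t; exact RCLike.inner_apply' _ _
      rwa [h2] at h1
    have hw0 : ∀ n : ℤ, fourierCoeff w n = 0 := by
      intro n
      rcases le_or_gt 0 n with hn | hn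
      · have h1 : fourierCoeff w n = (inner ℂ (mulLi hcU (eb n)) r : ℂ) := by
          rw [inner_mulLi_left, fourierCoeff]
          apply integral_congr_ae
          filter_upwards [coeFn_eb n] with t h2
          rw [h2, hwdef, smul_eq_mul, fourier_neg, map_mul]
          ring
        rw [h1]
        apply (Submodule.mem_orthogonal (Fsub hcU) r).1 hro
        exact mem_Fsub.2 ⟨eb n, eb_mem_Hsub hn, rfl⟩
      · have h1 : fourierCoeff w n
            = conj (inner ℂ (mulLi (unim_fourier (-n)) r) c : ℂ) := by
          rw [inner_mulLi_left, ← integral_conj, fourierCoeff]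
          apply integral_congr_ae
          filter_upwards with t
          simp only [hwdef, smul_eq_mul, map_mul, Complex.conj_conj]
          ring
        rw [h1, (Submodule.mem_orthogonal SL c).1 hco _
          (hSmem r hrL (-n) (by omega)), map_zero]
    have hwae := ae_zero_of_fourierCoeff_zero hwint hw0
    have hrae : ⇑r =ᵐ[haarT] 0 := by
      filter_upwards [hwae, hunim] with t h1 h2
      have h3 : conj (c t) * r t = 0 := h1
      have h4 : c t ≠ 0 := by
        intro h
        rw [h] at h2
        simp at h2
      have h5 : conj (c t) ≠ 0 := by
        simpa using h4
      rcases mul_eq_zero.1 h3 with h6 | h6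
      · exact absurd h6 h5
      · exact h6
    have hr0 : r = 0 := by
      apply Lp.ext
      filter_upwards [hrae, Lp.coeFn_zero ℂ 2 haarT] with t h1 h2
      rw [h1, h2]
    have : z = (Submodule.orthogonalProjectionOnto (Fsub hcU) z : HL2) := by
      have := sub_eq_zero.1 (hrdef ▸ hr0 : z - _ = 0)
      exact this
    rw [this]
    exact hPz
  refine ⟨c, hcL, hcU, ?_, ?_⟩
  · intro z hz
    rcases mem_Fsub.1 (hLle hz) with ⟨h, hh, rfl⟩
    exact ⟨h, hh, coeFn_mulLi' hcU h⟩
  · intro L' h1 h2 h3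
    exact le_trans hLle (hGenLe L' h1 h2 h3)

end Beurling

section Divisor

lemma IsInnerF.unim {θ : Tc → ℂ} (h : IsInnerF θ) : Unim θ := ⟨h.1, h.2.1⟩

lemma isHardy_iff_mem_Hsub {f : HL2} : IsHardy f ↔ f ∈ Hsub := by
  constructor
  · intro h n hn
    rw [repr_eq_coeff]
    exact h n hn
  · intro h n hn
    rw [← repr_eq_coeff]
    exact h n hn

lemma integral_eq_repr0 (f : HL2) : ∫ t, f t ∂haarT = eb.repr f 0 := by
  rw [eb.repr_apply_apply, inner_def']
  apply integral_congr_ae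
  filter_upwards [coeFn_eb 0] with t h1
  rw [h1, fourier_zero, map_one, one_mul]

lemma memK_iff_mem_Ksub {φe : HL2} (hφ : IsInnerF ⇑φe) {f : HL2} :
    MemK ⇑φe f ↔ f ∈ Ksub hφ.unim := by
  rw [mem_Ksub]
  constructor
  · rintro ⟨h1, h2⟩
    exact ⟨isHardy_iff_mem_Hsub.1 h1, fun h hh =>
      h2 h (mulLi hφ.unim h) (isHardy_iff_mem_Hsub.2 hh) (coeFn_mulLi' _ _)⟩
  · rintro ⟨h1, h2⟩
    refine ⟨isHardy_iff_mem_Hsub.2 h1, fun h w hH hw => ?_⟩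
    have hweq : w = mulLi hφ.unim h := Lp.ext (hw.trans (coeFn_mulLi' _ _).symm)
    rw [hweq]
    exact h2 h (isHardy_iff_mem_Hsub.1 hH)

lemma phi_eq_mulLi_eb0 {φe : HL2} (hφ : IsInnerF ⇑φe) : mulLi hφ.unim (eb 0) = φe := by
  apply Lp.ext
  filter_upwards [coeFn_mulLi' hφ.unim (eb 0), coeFn_eb 0] with t h1 h2
  rw [h1, h2, fourier_zero, mul_one]

lemma phi_mem_Fsub {φe : HL2} (hφ : IsInnerF ⇑φe) : φe ∈ Fsub hφ.unim :=
  mem_Fsub.2 ⟨eb 0, eb_mem_Hsub le_rfl, phi_eq_mulLi_eb0 hφ⟩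

lemma unim_ne_zero {g : HL2} (hg : ∀ᵐ t ∂haarT, ‖g t‖ = 1) : g ≠ 0 := by
  intro h
  have h1 : ⇑g =ᵐ[haarT] 0 := by rw [h]; exact Lp.coeFn_zero ℂ 2 haarT
  have h2 : ∀ᵐ t ∂haarT, False := by
    filter_upwards [hg, h1] with t ht1 ht2
    rw [ht2] at ht1
    simp at ht1
  haveI : (ae haarT).NeBot := MeasureTheory.ae_neBot.2 (IsProbabilityMeasure.ne_zero haarT)
  exact h2.exists.choose_spec

lemma unit_conj {z : ℂ} (hz : ‖z‖ = 1) : z * conj z = 1 := by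
  rw [Complex.mul_conj, Complex.normSq_eq_norm_sq, hz]
  norm_num

lemma inner_phi_phi {φe : HL2} (hφ : IsInnerF ⇑φe) : (inner ℂ φe φe : ℂ) = 1 := by
  rw [inner_def']
  have h1 : ∀ᵐ t ∂haarT, conj (φe t) * φe t = 1 := by
    filter_upwards [hφ.2.1] with t ht
    rw [mul_comm]
    exact unit_conj ht
  rw [integral_congr_ae h1, integral_const]
  simp

/-- The key computation : if `a` divides `φ` then `a - ⟪φ,a⟫φ ∈ K_φ`. -/
lemma divisor_sub_mem_Ksub {φe : HL2} (hφ : IsInnerF ⇑φe) {a : HL2}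
    (ha : InnerDivides a φe) :
    a - (inner ℂ φe a : ℂ) • φe ∈ Ksub hφ.unim := by
  obtain ⟨haI, cdiv, hcI, hprod⟩ := ha
  have hcU : Unim ⇑cdiv := hcI.unim
  -- ∫ c·h = ĉ₀ ĥ₀ for Hardy h
  have hch : ∀ h : HL2, h ∈ Hsub →
      ∫ t, cdiv t * h t ∂haarT = eb.repr cdiv 0 * eb.repr h 0 := by
    intro h hh
    have h1 : ∫ t, cdiv t * h t ∂haarT = eb.repr (mulLi hcU h) 0 := by
      rw [← integral_eq_repr0]
      apply integral_congr_ae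
      filter_upwards [coeFn_mulLi' hcU h] with t h2
      rw [h2]
    rw [h1, repr_mulLi]
    rw [inner_eq_single 0]
    · rw [repr_conjmul_eb hcU, sub_zero, ← repr_eq_coeff, Complex.conj_conj]
    · intro n hn
      rcases lt_or_ge n 0 with h3 | h3
      · exact Or.inr (hh n h3)
      · left
        rw [repr_conjmul_eb hcU]
        have : fourierCoeff (⇑cdiv) (0 - n) = 0 := hcI.2.2 _ (by omega)
        rw [this, map_zero]
  rw [mem_Ksub]
  constructor
  · apply Submodule.sub_mem
    · exact isHardy_iff_mem_Hsub.1 (fun n hn => haI.2.2 n hn)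
    · exact Submodule.smul_mem _ _ (isHardy_iff_mem_Hsub.1 (fun n hn => hφ.2.2 n hn))
  · intro h hh
    rw [inner_sub_right, inner_smul_right]
    have hMa : (inner ℂ (mulLi hφ.unim h) a : ℂ)
        = conj (eb.repr cdiv 0 * eb.repr h 0) := by
      rw [inner_mulLi_left, ← hch h hh, ← integral_conj]
      apply integral_congr_ae
      filter_upwards [hprod, haI.2.1] with t h1 h2
      rw [h1]
      simp only [map_mul]
      linear_combination (conj (cdiv t) * conj (h t)) * unit_conj h2
    have hMφ : (inner ℂ (mulLi hφ.unim h) φe : ℂ) = conj (eb.repr h 0) := by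
      rw [inner_mulLi_left, ← integral_eq_repr0 h, ← integral_conj]
      apply integral_congr_ae
      filter_upwards [hφ.2.1] with t h2
      simp only [map_mul]
      linear_combination conj (h t) * unit_conj h2
    have hs : (inner ℂ φe a : ℂ) = conj (eb.repr cdiv 0) := by
      have h0 : ∫ t, cdiv t ∂haarT = eb.repr cdiv 0 := integral_eq_repr0 cdiv
      rw [inner_def', ← h0, ← integral_conj]
      apply integral_congr_ae
      filter_upwards [hprod, haI.2.1] with t h1 h2
      rw [h1]
      simp only [map_mul]
      linear_combination conj (cdiv t) * unit_conj h2
    rw [hMa, hMφ, hs]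
    simp only [map_mul]
    ring

end Divisor

section Model

lemma isClosed_sup_orth {F E : Submodule ℂ HL2} (hFc : IsClosed (F : Set HL2))
    [FiniteDimensional ℂ E] (hFE : F ≤ Eᗮ) :
    IsClosed ((F ⊔ E : Submodule ℂ HL2) : Set HL2) := by
  haveI : CompleteSpace E := FiniteDimensional.complete ℂ E
  have hQ : ((F ⊔ E : Submodule ℂ HL2) : Set HL2)
      = (fun x => x - (Submodule.orthogonalProjectionOnto E x : HL2)) ⁻¹' F := by
    ext x
    simp only [Set.mem_preimage, SetLike.mem_coe]
    constructor
    · intro hx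
      rcases Submodule.mem_sup.1 hx with ⟨f, hf, e, he, rfl⟩
      have h1 : Submodule.orthogonalProjectionOnto E (f + e) = (⟨e, he⟩ : E) := by
        rw [map_add, Submodule.orthogonalProjectionOnto_apply_of_mem_orthogonal (hFE hf),
          zero_add]
        exact Submodule.orthogonalProjectionOnto_mem_subspace_eq_self (⟨e, he⟩ : E)
      rw [h1]
      simpa using hf
    · intro hx
      have : x = (x - (Submodule.orthogonalProjectionOnto E x : HL2)) + (Submodule.orthogonalProjectionOnto E x : HL2) := by
        abel
      rw [this]
      exact Submodule.mem_sup.2 ⟨_, hx, _, SetLike.coe_mem _, rfl⟩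
  rw [hQ]
  apply IsClosed.preimage _ hFc
  exact continuous_id.sub (E.subtypeL.comp (Submodule.orthogonalProjectionOnto E)).continuous

variable {φe : HL2}

lemma phiHardy (hφ : IsInnerF ⇑φe) : ∀ n : ℤ, n < 0 → fourierCoeff (⇑φe) n = 0 :=
  fun n hn => hφ.2.2 n hn

lemma Fsub_le_Hsub' (hφ : IsInnerF ⇑φe) : Fsub hφ.unim ≤ Hsub :=
  Fsub_le_Hsub hφ.unim (phiHardy hφ)

/-- the compression of the shift -/
def Tcomp (hφ : IsInnerF ⇑φe) : HL2 →L[ℂ] HL2 :=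
  haveI := (isClosed_Fsub hφ.unim).completeSpace_coe
  Sop.toContinuousLinearMap - (Fsub hφ.unim).subtypeL.comp
    ((Submodule.orthogonalProjectionOnto (Fsub hφ.unim)).comp Sop.toContinuousLinearMap)

lemma Tcomp_apply (hφ : IsInnerF ⇑φe) (f : HL2) :
    haveI := (isClosed_Fsub hφ.unim).completeSpace_coe
    Tcomp hφ f = Sop f - (Submodule.orthogonalProjectionOnto (Fsub hφ.unim) (Sop f) : HL2) := rfl

lemma decomp_mem_Ksub (hφ : IsInnerF ⇑φe) {g : HL2} (hg : g ∈ Hsub) :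
    haveI := (isClosed_Fsub hφ.unim).completeSpace_coe
    g - (Submodule.orthogonalProjectionOnto (Fsub hφ.unim) g : HL2) ∈ Ksub hφ.unim := by
  haveI := (isClosed_Fsub hφ.unim).completeSpace_coe
  refine Submodule.mem_inf.2 ⟨?_, ?_⟩
  · exact Submodule.sub_mem _ hg (Fsub_le_Hsub' hφ (SetLike.coe_mem _))
  · exact Submodule.sub_starProjection_mem_orthogonal g

lemma Tcomp_mem_Ksub (hφ : IsInnerF ⇑φe) {v : HL2} (hv : v ∈ Ksub hφ.unim) :
    Tcomp hφ v ∈ Ksub hφ.unim := by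
  rw [Tcomp_apply]
  exact decomp_mem_Ksub hφ (Sop_mem_Hsub (Submodule.mem_inf.1 hv).1)

lemma Sop_mem_Fsub {φf : Tc → ℂ} (hφu : Unim φf) {u : HL2} (hu : u ∈ Fsub hφu) :
    Sop u ∈ Fsub hφu := by
  rcases mem_Fsub.1 hu with ⟨h, hh, rfl⟩
  have h1 : Sop (mulLi hφu h) = mulLi hφu (Sop h) := by
    apply Lp.ext
    filter_upwards [coeFn_mulLi' (unim_fourier 1) (mulLi hφu h),
      coeFn_mulLi' hφu h, coeFn_mulLi' hφu (Sop h),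
      coeFn_mulLi' (unim_fourier 1) h] with t h1 h2 h3 h4
    rw [show ⇑(Sop (mulLi hφu h)) = ⇑(mulLi (unim_fourier 1) (mulLi hφu h)) from rfl, h1, h2,
      h3, show ⇑(Sop h) = ⇑(mulLi (unim_fourier 1) h) from rfl, h4]
    ring
  rw [h1]
  exact mem_Fsub.2 ⟨Sop h, Sop_mem_Hsub hh, rfl⟩

/-- shift decomposition on a sup `F ⊔ G` with `G ≤ K` and `T G ⊆ G`. -/
lemma Sop_mem_sup (hφ : IsInnerF ⇑φe) {G : Submodule ℂ HL2} (hGK : G ≤ Ksub hφ.unim)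
    (hTG : ∀ v ∈ G, Tcomp hφ v ∈ G) {x : HL2} (hx : x ∈ Fsub hφ.unim ⊔ G) :
    Sop x ∈ Fsub hφ.unim ⊔ G := by
  haveI := (isClosed_Fsub hφ.unim).completeSpace_coe
  rcases Submodule.mem_sup.1 hx with ⟨f, hf, g, hg, rfl⟩
  rw [map_add]
  apply Submodule.add_mem
  · exact Submodule.mem_sup_left (Sop_mem_Fsub hφ.unim hf)
  · have h1 : Sop g = (Submodule.orthogonalProjectionOnto (Fsub hφ.unim) (Sop g) : HL2) + Tcomp hφ g := by
      rw [Tcomp_apply]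
      abel
    rw [h1]
    exact Submodule.add_mem _ (Submodule.mem_sup_left (SetLike.coe_mem _))
      (Submodule.mem_sup_right (hTG g hg))

end Model

section Flag

variable {φe : HL2}

/-- divisor difference set -/
def S1set (φe : HL2) : Set HL2 :=
  {g : HL2 | ∃ a : HL2, InnerDivides a φe ∧ g = a - (inner ℂ φe a : ℂ) • φe}

lemma Ksub_le_Hsub (hφu : Unim (⇑φe)) : Ksub hφu ≤ Hsub := inf_le_left

lemma exists_flag (hφ : IsInnerF ⇑φe) [FiniteDimensional ℂ (Ksub hφ.unim)] :
    ∀ j : ℕ, j ≤ Module.finrank ℂ (Ksub hφ.unim) →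
    ∃ E : Submodule ℂ HL2, E ≤ Ksub hφ.unim ∧
      E ≤ Submodule.span ℂ (S1set φe) ∧
      (∀ v ∈ E, Tcomp hφ v ∈ E) ∧ Module.finrank ℂ E = j := by
  intro j
  induction j with
  | zero =>
      intro _
      refine ⟨⊥, bot_le, bot_le, ?_, finrank_bot ℂ HL2⟩
      intro v hv
      rw [Submodule.mem_bot] at hv
      rw [hv, map_zero]
      exact Submodule.zero_mem ⊥
  | succ j ih =>
      intro hj1
      obtain ⟨E, hEK, hES1, hTE, hEr⟩ := ih (by omega)
      haveI hEfd : FiniteDimensional ℂ E := Submodule.finiteDimensional_of_le hEK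
      haveI : CompleteSpace E := FiniteDimensional.complete ℂ E
      -- the orthocomplement of E inside K
      set W : Submodule ℂ HL2 := Ksub hφ.unim ⊓ Eᗮ with hWdef
      haveI hWfd : FiniteDimensional ℂ W :=
        Submodule.finiteDimensional_of_le inf_le_left
      haveI : CompleteSpace W := FiniteDimensional.complete ℂ W
      have hWK : W ≤ Ksub hφ.unim := inf_le_left
      have hWE : W ≤ Eᗮ := inf_le_right
      have hEWo : E ≤ Wᗮ :=
        le_trans (Submodule.le_orthogonal_orthogonal E) (Submodule.orthogonal_le hWE)
      -- decomposition of K-elements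
      have hdec : ∀ x ∈ Ksub hφ.unim, x - (Submodule.orthogonalProjectionOnto E x : HL2) ∈ W := by
        intro x hx
        refine Submodule.mem_inf.2 ⟨?_, Submodule.sub_starProjection_mem_orthogonal x⟩
        exact Submodule.sub_mem _ hx (hEK (SetLike.coe_mem _))
      have hWne : W ≠ ⊥ := by
        intro hW
        have hKE : Ksub hφ.unim ≤ E := by
          intro x hx
          have h1 := hdec x hx
          rw [hW, Submodule.mem_bot, sub_eq_zero] at h1
          rw [h1]
          exact SetLike.coe_mem _
        have := Submodule.finrank_mono hKE
        omega
      haveI : Nontrivial W := Submodule.nontrivial_iff_ne_bot.2 hWne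
      -- eigenvector of the compression of Tcomp to W
      set u : Module.End ℂ W :=
        ((Submodule.orthogonalProjectionOnto W).comp ((Tcomp hφ).comp W.subtypeL)).toLinearMap with hu
      obtain ⟨μ, hμ⟩ := Module.End.exists_eigenvalue u
      obtain ⟨v, hv⟩ := hμ.exists_hasEigenvector
      set f0 : HL2 := (v : HL2) with hf0
      have hf0W : f0 ∈ W := SetLike.coe_mem v
      have hf0K : f0 ∈ Ksub hφ.unim := hWK hf0W
      have hf0ne : f0 ≠ 0 := fun h => hv.2 (Subtype.ext h)
      -- Tcomp f0 ∈ E ⊔ ℂ f0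
      have hTf0 : Tcomp hφ f0 ∈ E ⊔ (ℂ ∙ f0) := by
        have hx : Tcomp hφ f0 ∈ Ksub hφ.unim := Tcomp_mem_Ksub hφ hf0K
        have h1 : Tcomp hφ f0 - (Submodule.orthogonalProjectionOnto E (Tcomp hφ f0) : HL2) ∈ W :=
          hdec _ hx
        have h2 : (Submodule.orthogonalProjectionOnto W (Tcomp hφ f0) : HL2)
            = Tcomp hφ f0 - (Submodule.orthogonalProjectionOnto E (Tcomp hφ f0) : HL2) := by
          have hsplit : Tcomp hφ f0 = (Submodule.orthogonalProjectionOnto E (Tcomp hφ f0) : HL2)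
              + (Tcomp hφ f0 - (Submodule.orthogonalProjectionOnto E (Tcomp hφ f0) : HL2)) := by abel
          have hz : Submodule.orthogonalProjectionOnto W ((Submodule.orthogonalProjectionOnto E (Tcomp hφ f0) : HL2))
              = 0 := Submodule.orthogonalProjectionOnto_apply_of_mem_orthogonal
                (hEWo (SetLike.coe_mem _))
          have hid : (Submodule.orthogonalProjectionOnto W (Tcomp hφ f0
                - (Submodule.orthogonalProjectionOnto E (Tcomp hφ f0) : HL2)) : HL2)
              = Tcomp hφ f0 - (Submodule.orthogonalProjectionOnto E (Tcomp hφ f0) : HL2) :=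
            Submodule.starProjection_eq_self_iff.2 h1
          calc (Submodule.orthogonalProjectionOnto W (Tcomp hφ f0) : HL2)
              = (Submodule.orthogonalProjectionOnto W ((Submodule.orthogonalProjectionOnto E (Tcomp hφ f0) : HL2)
                  + (Tcomp hφ f0 - (Submodule.orthogonalProjectionOnto E (Tcomp hφ f0) : HL2))) : HL2) := by
                rw [← hsplit]
            _ = ((Submodule.orthogonalProjectionOnto W ((Submodule.orthogonalProjectionOnto E (Tcomp hφ f0) : HL2))
                  + Submodule.orthogonalProjectionOnto W (Tcomp hφ f0
                    - (Submodule.orthogonalProjectionOnto E (Tcomp hφ f0) : HL2)) : W) : HL2) := by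
                rw [map_add]
            _ = Tcomp hφ f0 - (Submodule.orthogonalProjectionOnto E (Tcomp hφ f0) : HL2) := by
                rw [hz, zero_add, hid]
        have h3 : (Submodule.orthogonalProjectionOnto W (Tcomp hφ f0) : HL2) = μ • f0 := by
          have h4 := hv.apply_eq_smul
          have h5 : u v = Submodule.orthogonalProjectionOnto W (Tcomp hφ f0) := rfl
          rw [h5] at h4
          calc (Submodule.orthogonalProjectionOnto W (Tcomp hφ f0) : HL2) = ((μ • v : W) : HL2) := by
                rw [h4]
            _ = μ • f0 := rfl
        have h6 : Tcomp hφ f0 = (Submodule.orthogonalProjectionOnto E (Tcomp hφ f0) : HL2) + μ • f0 := by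
          rw [← h3, h2]
          abel
        rw [h6]
        exact Submodule.add_mem _ (Submodule.mem_sup_left (SetLike.coe_mem _))
          (Submodule.mem_sup_right (Submodule.smul_mem _ _
            (Submodule.mem_span_singleton_self f0)))
      set G : Submodule ℂ HL2 := E ⊔ (ℂ ∙ f0) with hGdef
      haveI hGfd : FiniteDimensional ℂ G := by
        apply Submodule.finiteDimensional_sup
      have hGK : G ≤ Ksub hφ.unim :=
        sup_le hEK ((Submodule.span_singleton_le_iff_mem _ _).2 hf0K)
      have hTG : ∀ x ∈ G, Tcomp hφ x ∈ G := by
        intro x hx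
        rcases Submodule.mem_sup.1 hx with ⟨e, he, s, hs, rfl⟩
        rcases Submodule.mem_span_singleton.1 hs with ⟨t, rfl⟩
        rw [map_add, _root_.map_smul]
        exact Submodule.add_mem _ (Submodule.mem_sup_left (hTE e he))
          (Submodule.smul_mem _ _ hTf0)
      -- orthogonality of Fsub to subspaces of Ksub
      have hFo : ∀ G' : Submodule ℂ HL2, G' ≤ Ksub hφ.unim → Fsub hφ.unim ≤ G'ᗮ := by
        intro G' hG' f hf
        rw [Submodule.mem_orthogonal]
        intro g hg
        have h1 : g ∈ (Fsub hφ.unim)ᗮ := (Submodule.mem_inf.1 (hG' hg)).2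
        rw [← inner_eq_zero_symm]
        exact (Submodule.mem_orthogonal _ _).1 h1 f hf
      -- intersection of invariant subspaces with Ksub
      have hcap : ∀ (G' : Submodule ℂ HL2), G' ≤ Ksub hφ.unim → ∀ x,
          x ∈ Fsub hφ.unim ⊔ G' → x ∈ Ksub hφ.unim → x ∈ G' := by
        intro G' hG' x hx hxK
        rcases Submodule.mem_sup.1 hx with ⟨f, hf, g, hg, rfl⟩
        have h1 : f ∈ Ksub hφ.unim := by
          have : f = (f + g) - g := by abel
          rw [this]
          exact Submodule.sub_mem _ hxK (hG' hg)
        have h2 : f = 0 := Ksub_inf_Fsub hφ.unim h1 hf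
        rw [h2, zero_add]
        exact hg
      -- the invariant subspace L = φH² ⊔ G
      set L : Submodule ℂ HL2 := Fsub hφ.unim ⊔ G with hLdef
      have hLc : IsClosed (L : Set HL2) :=
        isClosed_sup_orth (isClosed_Fsub hφ.unim) (hFo G hGK)
      have hLinv : ∀ x ∈ L, Sop x ∈ L := fun x hx => Sop_mem_sup hφ hGK hTG hx
      have hLH : L ≤ Hsub := sup_le (Fsub_le_Hsub' hφ) (le_trans hGK (Ksub_le_Hsub _))
      have hφL : φe ∈ L := Submodule.mem_sup_left (phi_mem_Fsub hφ)
      have hφne : φe ≠ 0 := unim_ne_zero hφ.2.1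
      have hLne : L ≠ ⊥ := by
        intro h
        rw [h, Submodule.mem_bot] at hφL
        exact hφne hφL
      obtain ⟨cc, hccL, hccU, hfac, hmin⟩ := beurling hLc hLinv hLH hLne
      -- cc is an inner divisor of φ
      have hccH : IsHardyFun ⇑cc := fun n hn => by
        rw [← repr_eq_coeff]
        exact hLH hccL n hn
      have hccI : IsInnerF ⇑cc := ⟨Lp.aestronglyMeasurable cc, hccU.2, hccH⟩
      obtain ⟨d, hdH, hφd⟩ := hfac φe hφL
      have hdI : IsInnerF ⇑d := by
        refine ⟨Lp.aestronglyMeasurable d, ?_, fun n hn => by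
          rw [← repr_eq_coeff]; exact hdH n hn⟩
        filter_upwards [hφ.2.1, hccU.2, hφd] with t h1 h2 h3
        have h4 : ‖φe t‖ = ‖cc t‖ * ‖d t‖ := by rw [h3]; exact norm_mul _ _
        rw [h1, h2, one_mul] at h4
        exact h4.symm
      have hdiv : InnerDivides cc φe := ⟨hccI, d, hdI, hφd⟩
      set v' : HL2 := cc - (inner ℂ φe cc : ℂ) • φe with hv'def
      have hv'S1 : v' ∈ S1set φe := ⟨cc, hdiv, rfl⟩
      have hv'K : v' ∈ Ksub hφ.unim := divisor_sub_mem_Ksub hφ hdiv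
      have hv'L : v' ∈ L := Submodule.sub_mem _ hccL (Submodule.smul_mem _ _ hφL)
      have hv'G : v' ∈ G := hcap G hGK v' hv'L hv'K
      -- v' is not in E
      have hv'E : v' ∉ E := by
        intro hvE
        -- then cc lies in the smaller invariant subspace F ⊔ E
        have hccL'' : cc ∈ Fsub hφ.unim ⊔ E := by
          have h1 : cc = v' + (inner ℂ φe cc : ℂ) • φe := by rw [hv'def]; abel
          rw [h1]
          exact Submodule.add_mem _ (Submodule.mem_sup_right hvE)
            (Submodule.smul_mem _ _ (Submodule.mem_sup_left (phi_mem_Fsub hφ)))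
        have hL''c : IsClosed ((Fsub hφ.unim ⊔ E : Submodule ℂ HL2) : Set HL2) :=
          isClosed_sup_orth (isClosed_Fsub hφ.unim) (hFo E hEK)
        have hL''inv : ∀ y ∈ Fsub hφ.unim ⊔ E, Sop y ∈ Fsub hφ.unim ⊔ E :=
          fun y hy => Sop_mem_sup hφ hEK hTE hy
        have hLle'' : L ≤ Fsub hφ.unim ⊔ E := hmin _ hL''c hL''inv hccL''
        have hf0L : f0 ∈ L := Submodule.mem_sup_right
          (Submodule.mem_sup_right (Submodule.mem_span_singleton_self f0))
        have hf0E : f0 ∈ E := hcap E hEK f0 (hLle'' hf0L) hf0K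
        have : (inner ℂ f0 f0 : ℂ) = 0 :=
          (Submodule.mem_orthogonal _ _).1 (hWE hf0W) f0 hf0E
        rw [inner_self_eq_zero] at this
        exact hf0ne this
      have hv'ne : v' ≠ 0 := by
        intro h
        rw [h] at hv'E
        exact hv'E (Submodule.zero_mem E)
      -- the new subspace
      set E' : Submodule ℂ HL2 := E ⊔ (ℂ ∙ v') with hE'def
      have hE'G : E' ≤ G :=
        sup_le le_sup_left ((Submodule.span_singleton_le_iff_mem _ _).2 hv'G)
      have hinf : E ⊓ (ℂ ∙ v') = ⊥ := by
        rw [Submodule.eq_bot_iff]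
        intro x hx
        rcases Submodule.mem_span_singleton.1 (Submodule.mem_inf.1 hx).2 with ⟨t, rfl⟩
        rcases eq_or_ne t 0 with rfl | ht
        · rw [zero_smul]
        · exfalso
          apply hv'E
          have h1 := (Submodule.mem_inf.1 hx).1
          have h2 : v' = t⁻¹ • (t • v') := by
            rw [smul_smul, inv_mul_cancel₀ ht, one_smul]
          rw [h2]
          exact Submodule.smul_mem _ _ h1
      haveI : FiniteDimensional ℂ (ℂ ∙ v') := by infer_instance
      have hE'r : Module.finrank ℂ E' = j + 1 := by
        have h1 := Submodule.finrank_sup_add_finrank_inf_eq E (ℂ ∙ v')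
        rw [hinf, finrank_bot, add_zero, hEr, finrank_span_singleton hv'ne] at h1
        exact h1
      have hf0G : f0 ∈ G := Submodule.mem_sup_right (Submodule.mem_span_singleton_self f0)
      have hGr : Module.finrank ℂ G ≤ j + 1 := by
        have h1 := Submodule.finrank_sup_add_finrank_inf_eq E (ℂ ∙ f0)
        have h2 : Module.finrank ℂ (ℂ ∙ f0 : Submodule ℂ HL2) = 1 :=
          finrank_span_singleton hf0ne
        calc Module.finrank ℂ G
            ≤ Module.finrank ℂ ↥(E ⊔ (ℂ ∙ f0)) + Module.finrank ℂ ↥(E ⊓ (ℂ ∙ f0)) :=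
              Nat.le_add_right _ _
          _ = j + 1 := by rw [h1, hEr, h2]
      have hE'G' : E' = G := Submodule.eq_of_le_of_finrank_le hE'G (by omega)
      refine ⟨E', le_trans hE'G hGK, ?_, ?_, hE'r⟩
      · apply sup_le (le_trans hES1 (le_refl _))
        rw [Submodule.span_singleton_le_iff_mem]
        exact Submodule.subset_span hv'S1
      · intro x hx
        rw [hE'G']
        exact hTG x (hE'G' ▸ hx)

end Flag

section Final

lemma eb0_innerF : IsInnerF ⇑(eb 0 : HL2) := by
  refine ⟨Lp.aestronglyMeasurable _, ?_, fun n hn => by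
    rw [← repr_eq_coeff]; exact eb_mem_Hsub le_rfl n hn⟩
  filter_upwards [coeFn_eb 0] with t ht
  rw [ht, fourier_zero]
  norm_num

lemma phi_divides_self {φe : HL2} (hφ : IsInnerF ⇑φe) : InnerDivides φe φe := by
  refine ⟨hφ, eb 0, eb0_innerF, ?_⟩
  filter_upwards [coeFn_eb 0] with t ht
  rw [ht, fourier_zero, mul_one]

theorem span_inner_divisors_rank'
    (φe : HL2) (hφ : IsInnerF ⇑φe) (k : ℕ)
    (b : Fin k → HL2) (hbK : ∀ i, MemK (⇑φe) (b i))
    (hbspan : ∀ g : HL2, MemK (⇑φe) g → g ∈ Submodule.span ℂ (Set.range b))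
    (hbind : LinearIndependent ℂ b) :
    Module.rank ℂ ↥(Submodule.span ℂ
        {g : HL2 | ∃ a : HL2, InnerDivides a φe ∧ g = a - (inner ℂ φe a : ℂ) • φe})
      = (k : Cardinal) ∧
    Module.rank ℂ ↥(Submodule.span ℂ {a : HL2 | InnerDivides a φe})
      = ((k : Cardinal) + 1) := by
  have hKeq : Ksub hφ.unim = Submodule.span ℂ (Set.range b) := by
    apply le_antisymm
    · intro g hg
      exact hbspan g ((memK_iff_mem_Ksub hφ).2 hg)
    · rw [Submodule.span_le]
      rintro - ⟨i, rfl⟩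
      exact (memK_iff_mem_Ksub hφ).1 (hbK i)
  haveI hKfd : FiniteDimensional ℂ (Ksub hφ.unim) := by
    rw [hKeq]
    exact FiniteDimensional.span_of_finite ℂ (Set.finite_range b)
  have hKr : Module.finrank ℂ (Ksub hφ.unim) = k := by
    rw [hKeq, finrank_span_eq_card hbind, Fintype.card_fin]
  -- span of the divisor differences is exactly K
  have hspan1 : Submodule.span ℂ (S1set φe) = Ksub hφ.unim := by
    apply le_antisymm
    · rw [Submodule.span_le]
      rintro - ⟨a, hdiv, rfl⟩
      exact divisor_sub_mem_Ksub hφ hdiv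
    · obtain ⟨E, hEK, hES1, -, hEr⟩ := exists_flag hφ (Module.finrank ℂ (Ksub hφ.unim)) le_rfl
      have hEeq : E = Ksub hφ.unim :=
        Submodule.eq_of_le_of_finrank_le hEK (le_of_eq hEr.symm)
      rw [← hEeq]
      exact hES1
  haveI hS1fd : FiniteDimensional ℂ ↥(Submodule.span ℂ (S1set φe)) := by
    rw [hspan1]; exact hKfd
  have hrank1 : Module.rank ℂ ↥(Submodule.span ℂ (S1set φe)) = (k : Cardinal) := by
    rw [← Module.finrank_eq_rank]
    norm_cast
    rw [show Module.finrank ℂ ↥(Submodule.span ℂ (S1set φe))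
        = Module.finrank ℂ (Ksub hφ.unim) by rw [hspan1], hKr]
  -- the divisors themselves
  have hφne : φe ≠ 0 := unim_ne_zero hφ.2.1
  have hDeq : Submodule.span ℂ {a : HL2 | InnerDivides a φe}
      = Ksub hφ.unim ⊔ (ℂ ∙ φe) := by
    apply le_antisymm
    · rw [Submodule.span_le]
      intro a ha
      have h1 : a = (a - (inner ℂ φe a : ℂ) • φe) + (inner ℂ φe a : ℂ) • φe := by abel
      rw [SetLike.mem_coe, h1]
      exact Submodule.add_mem _
        (Submodule.mem_sup_left (divisor_sub_mem_Ksub hφ ha))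
        (Submodule.mem_sup_right (Submodule.smul_mem _ _
          (Submodule.mem_span_singleton_self φe)))
    · apply sup_le
      · rw [← hspan1, Submodule.span_le]
        rintro - ⟨a, hdiv, rfl⟩
        apply Submodule.sub_mem
        · exact Submodule.subset_span hdiv
        · exact Submodule.smul_mem _ _
            (Submodule.subset_span (phi_divides_self hφ))
      · rw [Submodule.span_singleton_le_iff_mem]
        exact Submodule.subset_span (phi_divides_self hφ)
  have hinfKφ : Ksub hφ.unim ⊓ (ℂ ∙ φe) = ⊥ := by
    rw [Submodule.eq_bot_iff]
    intro x hx
    rcases Submodule.mem_span_singleton.1 (Submodule.mem_inf.1 hx).2 with ⟨t, rfl⟩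
    have h1 := (mem_Ksub.1 (Submodule.mem_inf.1 hx).1).2 (eb 0) (eb_mem_Hsub le_rfl)
    rw [phi_eq_mulLi_eb0 hφ, inner_smul_right, inner_phi_phi hφ, mul_one] at h1
    rw [h1, zero_smul]
  haveI : FiniteDimensional ℂ ↥(Ksub hφ.unim ⊔ (ℂ ∙ φe)) :=
    Submodule.finiteDimensional_sup _ _
  have hDr : Module.finrank ℂ ↥(Ksub hφ.unim ⊔ (ℂ ∙ φe)) = k + 1 := by
    have h1 := Submodule.finrank_sup_add_finrank_inf_eq (Ksub hφ.unim) (ℂ ∙ φe)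
    rw [hinfKφ, finrank_bot, add_zero, hKr, finrank_span_singleton hφne] at h1
    exact h1
  constructor
  · exact hrank1
  · rw [show {a : HL2 | InnerDivides a φe} = {a : HL2 | InnerDivides a φe} from rfl, hDeq,
      ← Module.finrank_eq_rank, hDr]
    push_cast
    ring

end Final

/-- for an inner function `φ` of finite degree `k` (i.e. `dim K_φ = k`), the
span of `{a - (a,φ)φ : a an inner divisor of φ}` has dimension `k`, and the span of the
inner divisors themselves has dimension `k + 1`. -/
theorem span_inner_divisors_rank
    (φe : HL2) (hφ : IsInnerF ⇑φe) (k : ℕ)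
    (b : Fin k → HL2) (hbK : ∀ i, MemK (⇑φe) (b i))
    (hbspan : ∀ g : HL2, MemK (⇑φe) g → g ∈ Submodule.span ℂ (Set.range b))
    (hbind : LinearIndependent ℂ b) :
    Module.rank ℂ ↥(Submodule.span ℂ
        {g : HL2 | ∃ a : HL2, InnerDivides a φe ∧ g = a - (inner ℂ φe a : ℂ) • φe})
      = (k : Cardinal) ∧
    Module.rank ℂ ↥(Submodule.span ℂ {a : HL2 | InnerDivides a φe})
      = ((k : Cardinal) + 1) := by
  exact span_inner_divisors_rank' φe hφ k b hbK hbspan hbind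

end
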